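/- For every odd integer k > 3, the complement of the k-cycle is color-critical: removing any vertex from the complement of C_k strictly decreases its chromatic number. -/

import Mathlib

open Fin.CommRing Fin.NatCast

private lemma fin_add4_val1 (n : ℕ) : ((1 : Fin (n+4)) : ℕ) = 1 := by
  simp [Fin.val_one']

private lemma fin_add4_two_ne_one (n : ℕ) : (2 : Fin (n+4)) ≠ 1 := by
  intro h
  have := congrArg Fin.val h
  simp [fin_add4_val1, Nat.mod_eq_of_lt (show 2 < n+4 by omega)] at this

private lemma fin_add4_three_ne_zero (n : ℕ) : (3 : Fin (n+4)) ≠ 0 := by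
  intro h
  have h3 : ((3 : Fin (n+4)) : ℕ) = 3 := by
    have he : (3 : Fin (n+4)) = ((3:ℕ) : Fin (n+4)) := by norm_cast
    rw [he, Fin.val_cast_of_lt (by omega)]
  have := congrArg Fin.val h
  rw [h3] at this
  simp at this

private lemma cycle_triangle_free (n : ℕ) {a b c : Fin (n+4)}
    (hab : a ≠ b) (hac : a ≠ c) (hbc : b ≠ c)
    (h1 : (SimpleGraph.cycleGraph (n+4)).Adj a b)
    (h2 : (SimpleGraph.cycleGraph (n+4)).Adj b c)
    (h3 : (SimpleGraph.cycleGraph (n+4)).Adj a c) : False := by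
  rw [SimpleGraph.cycleGraph_adj] at h1 h2 h3
  rcases h1 with h1 | h1 <;> rcases h2 with h2 | h2 <;> rcases h3 with h3 | h3 <;>
    first
      | exact fin_add4_two_ne_one n (by linear_combination -(h1 + h2 - h3))
      | exact fin_add4_three_ne_zero n (by linear_combination -(h1 + h2 + h3))
      | exact hac (sub_eq_zero.mp (by linear_combination h1 - h2))
      | exact hac (sub_eq_zero.mp (by linear_combination h1 - h2)).symm

private lemma fin_succ_of_val_succ {n : ℕ} {x y : Fin (n+4)} (h : y.val = x.val + 1) :
    y = x + 1 := by
  apply Fin.ext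
  rw [Fin.val_add, fin_add4_val1, h, Nat.mod_eq_of_lt (by omega)]

/-- For every odd integer `k > 3`, the complement of the `k`-cycle is color-critical:
removing any vertex strictly decreases its chromatic number. -/
theorem compl_odd_cycle_color_critical (k : ℕ) (hk : 3 < k) (hodd : Odd k) :
    ∀ v : Fin k,
      (((SimpleGraph.cycleGraph k)ᶜ).induce ({v}ᶜ : Set (Fin k))).chromaticNumber
        < ((SimpleGraph.cycleGraph k)ᶜ).chromaticNumber := by
  intro v
  obtain ⟨m, hm⟩ := hodd
  obtain ⟨n, rfl⟩ : ∃ n, k = n + 4 := ⟨k - 4, by omega⟩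
  have hm2 : 2 ≤ m := by omega
  -- the induced graph is `m`-colorable
  have hcol : (((SimpleGraph.cycleGraph (n+4))ᶜ).induce
      ({v}ᶜ : Set (Fin (n+4)))).Colorable m := by
    have hbound : ∀ u : ({v}ᶜ : Set (Fin (n+4))), ((u.1 - v).val - 1) / 2 < m := by
      intro u
      have hne : (u : Fin (n+4)) ≠ v := u.2
      have h2 : (u.1 - v) ≠ 0 := sub_ne_zero.mpr hne
      have h2' : (u.1 - v).val ≠ 0 := fun h => h2 (Fin.ext (by simpa using h))
      have h1 : (u.1 - v).val < n + 4 := (u.1 - v).isLt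
      omega
    refine ⟨SimpleGraph.Coloring.mk (fun u => ⟨((u.1 - v).val - 1) / 2, hbound u⟩) ?_⟩
    intro u w hadj heq
    have hadj' : ((SimpleGraph.cycleGraph (n+4))ᶜ).Adj ↑u ↑w := hadj
    rw [SimpleGraph.compl_adj] at hadj'
    obtain ⟨hne, hnadj⟩ := hadj'
    set a := u.1 - v with ha
    set b := w.1 - v with hb
    have hne2 : a ≠ b := by
      intro h
      apply hne
      have : u.1 - v + v = w.1 - v + v := by rw [← ha, ← hb, h]
      simpa [sub_add_cancel] using this
    have hav : a.val ≠ b.val := fun h => hne2 (Fin.ext h)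
    have heq' : (a.val - 1) / 2 = (b.val - 1) / 2 := by
      simpa [Fin.ext_iff] using heq
    have hau : a.val ≠ 0 := by
      have : a ≠ 0 := sub_ne_zero.mpr u.2
      exact fun h => this (Fin.ext (by simpa using h))
    have hbu : b.val ≠ 0 := by
      have : b ≠ 0 := sub_ne_zero.mpr w.2
      exact fun h => this (Fin.ext (by simpa using h))
    have h1 : a.val < n + 4 := a.isLt
    have h2 : b.val < n + 4 := b.isLt
    have hcase : b.val = a.val + 1 ∨ a.val = b.val + 1 := by omega
    apply hnadj
    rw [SimpleGraph.cycleGraph_adj]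
    rcases hcase with hcase | hcase
    · right
      have hba : b = a + 1 := fin_succ_of_val_succ hcase
      have : w.1 = u.1 + 1 := by
        rw [ha] at hba; rw [hb] at hba
        linear_combination hba
      rw [this]; ring
    · left
      have hba : a = b + 1 := fin_succ_of_val_succ hcase
      have : u.1 = w.1 + 1 := by
        rw [ha] at hba; rw [hb] at hba
        linear_combination hba
      rw [this]; ring
  -- the full graph is not `m`-colorable
  have hnc : ¬ ((SimpleGraph.cycleGraph (n+4))ᶜ).Colorable m := by
    rintro ⟨C⟩
    have hfib : ∀ c : Fin m, (Finset.univ.filter fun a => C a = c).card ≤ 2 := by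
      intro c
      by_contra hgt
      push_neg at hgt
      obtain ⟨a, b, d, ha, hb, hd, hab, had, hbd⟩ := Finset.two_lt_card_iff.mp hgt
      simp only [Finset.mem_filter] at ha hb hd
      have adj : ∀ x y : Fin (n+4), x ≠ y → C x = C y →
          (SimpleGraph.cycleGraph (n+4)).Adj x y := by
        intro x y hxy hcxy
        by_contra hn
        exact C.valid ((SimpleGraph.compl_adj _ _ _).mpr ⟨hxy, hn⟩) hcxy
      exact cycle_triangle_free n hab had hbd
        (adj _ _ hab (ha.2.trans hb.2.symm))
        (adj _ _ hbd (hb.2.trans hd.2.symm))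
        (adj _ _ had (ha.2.trans hd.2.symm))
    have hcard := Finset.card_eq_sum_card_fiberwise
      (f := C) (s := Finset.univ) (t := Finset.univ) (fun x _ => Finset.mem_univ _)
    rw [Finset.card_univ, Fintype.card_fin] at hcard
    have hle : ∑ c : Fin m, (Finset.univ.filter fun a => C a = c).card
        ≤ ∑ _c : Fin m, 2 := Finset.sum_le_sum fun c _ => hfib c
    rw [Finset.sum_const, Finset.card_univ, Fintype.card_fin, smul_eq_mul] at hle
    omega
  have h1 : (((SimpleGraph.cycleGraph (n+4))ᶜ).induce
      ({v}ᶜ : Set (Fin (n+4)))).chromaticNumber ≤ m := hcol.chromaticNumber_le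
  have h2 : (m : ℕ∞) < ((SimpleGraph.cycleGraph (n+4))ᶜ).chromaticNumber := by
    by_contra h
    push_neg at h
    exact hnc (SimpleGraph.chromaticNumber_le_iff_colorable.mp h)
  exact lt_of_le_of_lt h1 h2
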